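/- (Kernel of a Weyl operator as a short-time Fourier transform of its symbol.) Let g ∈ 𝒮(ℝ^d) and let σ : ℝ^{2d} → ℂ be bounded and measurable. For w, z ∈ ℝ^{2d}, |∫_{ℝ^{2d}} σ(u) conj( W(π(w)g, π(z)g)(u) ) du| = |V_{W(g,g)} σ( (w+z)/2, j(w−z) )|, where the left-hand side is the Weyl pairing ⟨σ^w π(z)g, π(w)g⟩, W(f,h)(x,η) = ∫_{ℝ^d} f(x+t/2) conj(h(x−t/2)) e^{−2πi η·t} dt is the cross-Wigner distribution, j(z₁,z₂) = (z₂,−z₁) for z₁, z₂ ∈ ℝ^d, and V_Φσ(u,ζ) = ∫_{ℝ^{2d}} σ(y) conj(Φ(y−u)) e^{−2πi ζ·y} dy. -/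

import Mathlib

open MeasureTheory Complex SchwartzMap
open scoped Real ContDiff ENNReal

/-- Configuration space `ℝ^d`. -/
abbrev ConfSpace (d : ℕ) := EuclideanSpace ℝ (Fin d)

/-- Phase space `ℝ^{2d}`, with coordinates split as `(x, η)`. -/
abbrev PhaseSpace (d : ℕ) := EuclideanSpace ℝ (Fin d ⊕ Fin d)

/-- First (position) component of a phase-space point. -/
noncomputable def posPart {d : ℕ} (z : PhaseSpace d) : ConfSpace d := WithLp.toLp 2 (fun i => z (Sum.inl i))

/-- Second (frequency) component of a phase-space point. -/
noncomputable def freqPart {d : ℕ} (z : PhaseSpace d) : ConfSpace d := WithLp.toLp 2 (fun i => z (Sum.inr i))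

/-- Assemble a phase-space point from its components. -/
noncomputable def phasePt {d : ℕ} (x η : ConfSpace d) : PhaseSpace d := WithLp.toLp 2 (Sum.elim x η)

/-- The polynomial weight `v_s(z) = (1 + |z|^2)^(s/2)`. -/
noncomputable def vWeight (s : ℝ) {V : Type*} [NormedAddCommGroup V] (z : V) : ℝ :=
  (1 + ‖z‖ ^ 2) ^ (s / 2)

/-- The action of a matrix on `ℝ^{2d}`. -/
noncomputable def matApply {ι : Type*} [Fintype ι] (M : Matrix ι ι ℝ)
    (z : EuclideanSpace ℝ ι) : EuclideanSpace ℝ ι := WithLp.toLp 2 (M.mulVec z)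

/-- The standard symplectic matrix `J = [[0, -I],[I, 0]]`. -/
noncomputable def Jmat (d : ℕ) : Matrix (Fin d ⊕ Fin d) (Fin d ⊕ Fin d) ℝ :=
  Matrix.fromBlocks 0 (-1) 1 0

/-- `𝒜 ∈ Sp(d,ℝ)` iff `𝒜ᵀ J 𝒜 = J`. -/
def IsSymplectic {d : ℕ} (A : Matrix (Fin d ⊕ Fin d) (Fin d ⊕ Fin d) ℝ) : Prop :=
  A.transpose * Jmat d * A = Jmat d

/-- The time-frequency shift `π(z)f(t) = e^{2πi η·t} f(t - x)` of a plain function,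
where `z = (x, η)`. -/
noncomputable def tfShift {d : ℕ} (z : PhaseSpace d) (f : ConfSpace d → ℂ) :
    ConfSpace d → ℂ := fun t =>
  Complex.exp (2 * (π : ℂ) * Complex.I * ∑ i, (freqPart z i : ℂ) * (t i : ℂ)) *
    f (t - posPart z)

/-- The cross-Wigner distribution
`W(f,h)(x,η) = ∫ f(x + t/2) conj(h(x - t/2)) e^{-2πi η·t} dt`. -/
noncomputable def wigner {d : ℕ} (f h : ConfSpace d → ℂ) (p : PhaseSpace d) : ℂ :=
  ∫ t : ConfSpace d, f (posPart p + (2⁻¹ : ℝ) • t) *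
    (starRingEnd ℂ) (h (posPart p - (2⁻¹ : ℝ) • t)) *
    Complex.exp (-2 * (π : ℂ) * Complex.I * ∑ i, (freqPart p i : ℂ) * (t i : ℂ))

/-- The short-time Fourier transform on `ℝ^{2d}`:
`V_Φσ(u,ζ) = ∫ σ(y) conj(Φ(y-u)) e^{-2πi ζ·y} dy`. -/
noncomputable def stftPhase {d : ℕ} (Φ : PhaseSpace d → ℂ) (σ : PhaseSpace d → ℂ)
    (u ζ : PhaseSpace d) : ℂ :=
  ∫ y, σ y * (starRingEnd ℂ) (Φ (y - u)) *
    Complex.exp (-2 * (π : ℂ) * Complex.I * ∑ i, (ζ i : ℂ) * (y i : ℂ))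

/-- The rotation `j(z₁, z₂) = (z₂, -z₁)` of phase space. -/
noncomputable def jmap {d : ℕ} (z : PhaseSpace d) : PhaseSpace d :=
  WithLp.toLp 2 (Sum.elim (fun i => z (Sum.inr i)) (fun i => -(z (Sum.inl i))))

/-- Covariance of the cross-Wigner distribution under time-frequency shifts. -/
lemma wigner_cov {d : ℕ} (g : ConfSpace d → ℂ) (w z p : PhaseSpace d) :
    wigner (tfShift w g) (tfShift z g) p =
      Complex.exp (2 * (π:ℂ) * Complex.I *
        (((∑ i, (freqPart w i + freqPart z i) / 2 * (_root_.posPart w i - _root_.posPart z i) +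
           ∑ j, jmap (w - z) j * p j : ℝ)) : ℂ)) *
      wigner g g (p - (2⁻¹:ℝ) • (w + z)) := by
  set a : ConfSpace d := _root_.posPart w - _root_.posPart z with ha
  set p' : PhaseSpace d := p - (2⁻¹:ℝ) • (w + z) with hp'
  rw [wigner, wigner, ← integral_add_right_eq_self
    (fun t => (tfShift w g) (_root_.posPart p + (2⁻¹ : ℝ) • t) *
      (starRingEnd ℂ) ((tfShift z g) (_root_.posPart p - (2⁻¹ : ℝ) • t)) *
      Complex.exp (-2 * (π : ℂ) * Complex.I * ∑ i, (freqPart p i : ℂ) * (t i : ℂ))) a,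
    ← integral_const_mul]
  congr 1; funext t
  have hA1 : _root_.posPart p + (2⁻¹:ℝ) • (t + a) - _root_.posPart w
      = _root_.posPart p' + (2⁻¹:ℝ) • t := by
    ext i
    simp only [hp', ha, _root_.posPart, PiLp.toLp_apply, PiLp.add_apply, PiLp.sub_apply, PiLp.smul_apply,
      smul_eq_mul]
    ring
  have hA2 : _root_.posPart p - (2⁻¹:ℝ) • (t + a) - _root_.posPart z
      = _root_.posPart p' - (2⁻¹:ℝ) • t := by
    ext i
    simp only [hp', ha, _root_.posPart, PiLp.toLp_apply, PiLp.add_apply, PiLp.sub_apply, PiLp.smul_apply,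
      smul_eq_mul]
    ring
  simp only [tfShift, hA1, hA2, map_mul]
  rw [← Complex.exp_conj]
  have hexp : Complex.exp (2 * (π:ℂ) * Complex.I *
        ∑ i, (freqPart w i : ℂ) * ((_root_.posPart p + (2⁻¹:ℝ) • (t + a)) i : ℂ)) *
      Complex.exp ((starRingEnd ℂ) (2 * (π:ℂ) * Complex.I *
        ∑ i, (freqPart z i : ℂ) * ((_root_.posPart p - (2⁻¹:ℝ) • (t + a)) i : ℂ))) *
      Complex.exp (-2 * (π:ℂ) * Complex.I * ∑ i, (freqPart p i : ℂ) * ((t + a) i : ℂ)) =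
      Complex.exp (2 * (π:ℂ) * Complex.I *
        (((∑ i, (freqPart w i + freqPart z i) / 2 * (_root_.posPart w i - _root_.posPart z i) +
           ∑ j, jmap (w - z) j * p j : ℝ)) : ℂ)) *
      Complex.exp (-2 * (π:ℂ) * Complex.I * ∑ i, (freqPart p' i : ℂ) * (t i : ℂ)) := by
    rw [← Complex.exp_add, ← Complex.exp_add, ← Complex.exp_add]
    congr 1
    simp only [map_mul, map_sum, Complex.conj_I, Complex.conj_ofReal, map_ofNat,
      Fintype.sum_sum_type, jmap, Sum.elim_inl, Sum.elim_inr,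
      PiLp.add_apply, PiLp.sub_apply, PiLp.smul_apply, smul_eq_mul,
      _root_.posPart, freqPart, hp', ha, PiLp.toLp_apply]
    push_cast
    rw [← sub_eq_zero]
    simp only [Finset.mul_sum, Finset.sum_mul, ← Finset.sum_add_distrib,
      ← Finset.sum_sub_distrib]
    apply Finset.sum_eq_zero
    intro i _
    ring
  linear_combination (g (_root_.posPart p' + (2⁻¹:ℝ) • t) *
    (starRingEnd ℂ) (g (_root_.posPart p' - (2⁻¹:ℝ) • t))) * hexp

/-- The kernel of a Weyl operator with respect to time-frequency shifts equals a short-time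
Fourier transform of its symbol:
`|⟨σ^w π(z)g, π(w)g⟩| = |V_{W(g,g)}σ((w+z)/2, j(w-z))|`. -/
theorem weyl_kernel_eq_stft_of_symbol (d : ℕ) (g : SchwartzMap (ConfSpace d) ℂ)
    (σ : PhaseSpace d → ℂ) (hσmeas : Measurable σ) (Cb : ℝ) (hσbd : ∀ u, ‖σ u‖ ≤ Cb)
    (w z : PhaseSpace d) :
    ‖∫ u, σ u * (starRingEnd ℂ) (wigner (tfShift w (⇑g)) (tfShift z (⇑g)) u)‖ =
      ‖stftPhase (wigner (⇑g) (⇑g)) σ ((2⁻¹ : ℝ) • (w + z)) (jmap (w - z))‖ := by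
  set C₀ : ℝ := ∑ i, (freqPart w i + freqPart z i) / 2 *
      (_root_.posPart w i - _root_.posPart z i) with hC₀
  have hpt : ∀ u : PhaseSpace d,
      σ u * (starRingEnd ℂ) (wigner (tfShift w (⇑g)) (tfShift z (⇑g)) u) =
      Complex.exp (-(2 * (π:ℂ) * Complex.I * (C₀ : ℂ))) *
        (σ u * (starRingEnd ℂ) (wigner (⇑g) (⇑g) (u - (2⁻¹:ℝ) • (w + z))) *
         Complex.exp (-2 * (π:ℂ) * Complex.I * ∑ i, ((jmap (w - z)) i : ℂ) * (u i : ℂ))) := by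
    intro u
    rw [wigner_cov, map_mul, ← Complex.exp_conj]
    have h1 : (starRingEnd ℂ) (2 * (π:ℂ) * Complex.I *
        (((C₀ + ∑ j, jmap (w - z) j * u j : ℝ)) : ℂ)) =
        -(2 * (π:ℂ) * Complex.I * (C₀ : ℂ)) +
          (-2 * (π:ℂ) * Complex.I * ∑ i, ((jmap (w - z)) i : ℂ) * (u i : ℂ)) := by
      simp only [map_mul, Complex.conj_I, Complex.conj_ofReal, map_ofNat]
      push_cast
      ring
    rw [h1, Complex.exp_add]
    ring
  simp only [hpt]
  rw [integral_const_mul, norm_mul]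
  have hnorm : ‖Complex.exp (-(2 * (π:ℂ) * Complex.I * (C₀ : ℂ)))‖ = 1 := by
    simp [Complex.norm_exp]
  rw [hnorm, one_mul, stftPhase]
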